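/- arXiv:1707.02522 — 4 statements merged into one kernel-verified Lean document; each statement's English description precedes it below -/
import Mathlib

section
/- C_max is quasiconvex: for any finite family of states ρ_i and probability weights p_i (p_i ≥ 0, Σ_i p_i = 1), one has C_max(Σ_i p_i ρ_i) ≤ max_i C_max(ρ_i). -/
open scoped Matrix ComplexOrder

namespace OneShot

variable {ι κ : Type*} [Fintype ι] [DecidableEq ι] [Fintype κ] [DecidableEq κ]

/-- A quantum state: a positive semidefinite matrix with unit trace. -/
def IsState (ρ : Matrix ι ι ℂ) : Prop := ρ.PosSemidef ∧ ρ.trace = 1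

/-- An incoherent state: a state that is diagonal in the computational basis. -/
def IsIncoherent (ρ : Matrix ι ι ℂ) : Prop := IsState ρ ∧ ρ.IsDiag

/-- The completely dephasing channel `Δ`. -/
def dephase (ρ : Matrix ι ι ℂ) : Matrix ι ι ℂ := Matrix.diagonal fun i => ρ i i

/-- The max-relative entropy of coherence
`C_max(ρ) = min_{δ ∈ 𝓘} D_max(ρ‖δ) = log₂ min {λ ≥ 0 | ∃ δ ∈ 𝓘, ρ ≤ λ δ}`. -/
noncomputable def Cmax (ρ : Matrix ι ι ℂ) : ℝ :=
  Real.logb 2 (sInf {l : ℝ | 0 ≤ l ∧ ∃ δ, IsIncoherent δ ∧ (l • δ - ρ).PosSemidef})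

/-- `C_{Δ,max}(ρ) = log₂ min {λ ≥ 0 | ρ ≤ λ Δ(ρ)}`. -/
noncomputable def CDmax (ρ : Matrix ι ι ℂ) : ℝ :=
  Real.logb 2 (sInf {l : ℝ | 0 ≤ l ∧ (l • dephase ρ - ρ).PosSemidef})

/-- Complete positivity of a linear map on matrices. -/
def CompletelyPositive (Λ : Matrix ι ι ℂ →ₗ[ℂ] Matrix κ κ ℂ) : Prop :=
  ∀ (k : ℕ) (M : Matrix (Fin k × ι) (Fin k × ι) ℂ), M.PosSemidef →
    (Matrix.of fun p q : Fin k × κ =>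
      Λ (Matrix.of fun x y => M (p.1, x) (q.1, y)) p.2 q.2).PosSemidef

/-- Trace preservation. -/
def TracePreserving (Λ : Matrix ι ι ℂ →ₗ[ℂ] Matrix κ κ ℂ) : Prop :=
  ∀ A, (Λ A).trace = A.trace

/-- A maximally incoherent operation (MIO): a CPTP map sending every incoherent state
to an incoherent state. -/
def IsMIO (Λ : Matrix ι ι ℂ →ₗ[ℂ] Matrix κ κ ℂ) : Prop :=
  CompletelyPositive Λ ∧ TracePreserving Λ ∧ ∀ δ, IsIncoherent δ → IsIncoherent (Λ δ)

/-- A dephasing-covariant incoherent operation (DIO): a CPTP map commuting with `Δ`. -/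
def IsDIO (Λ : Matrix ι ι ℂ →ₗ[ℂ] Matrix ι ι ℂ) : Prop :=
  CompletelyPositive Λ ∧ TracePreserving Λ ∧ ∀ ρ, Λ (dephase ρ) = dephase (Λ ρ)

/-- An incoherent-preserving (Kraus) operator: `K δ Kᴴ` is a nonnegative multiple of an
incoherent state, for every incoherent state `δ`. -/
def IncoherentPreserving (K : Matrix κ ι ℂ) : Prop :=
  ∀ δ : Matrix ι ι ℂ, IsIncoherent δ →
    ∃ c : ℝ, 0 ≤ c ∧ ∃ δ' : Matrix κ κ ℂ, IsIncoherent δ' ∧ K * δ * Kᴴ = (c : ℂ) • δ'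

/-- An incoherent operation (IO). -/
def IsIO (Λ : Matrix ι ι ℂ →ₗ[ℂ] Matrix κ κ ℂ) : Prop :=
  ∃ (N : ℕ) (K : Fin N → Matrix κ ι ℂ),
    (∀ n, IncoherentPreserving (K n)) ∧ (∑ n, (K n)ᴴ * K n = 1) ∧
    ∀ ρ, Λ ρ = ∑ n, K n * ρ * (K n)ᴴ

/-- A strictly incoherent operation (SIO). -/
def IsSIO (Λ : Matrix ι ι ℂ →ₗ[ℂ] Matrix κ κ ℂ) : Prop :=
  ∃ (N : ℕ) (K : Fin N → Matrix κ ι ℂ),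
    (∀ n, IncoherentPreserving (K n)) ∧ (∀ n, IncoherentPreserving (K n)ᴴ) ∧
    (∑ n, (K n)ᴴ * K n = 1) ∧ ∀ ρ, Λ ρ = ∑ n, K n * ρ * (K n)ᴴ

/-- The outer product `|ψ⟩⟨ψ|`. -/
def outer (ψ : ι → ℂ) : Matrix ι ι ℂ := Matrix.of fun i j => ψ i * star (ψ j)

/-- `T ψ` is the number of nonzero computational-basis coefficients of `ψ`. -/
noncomputable def T (ψ : ι → ℂ) : ℕ := (Finset.univ.filter fun i => ψ i ≠ 0).card

/-- A finite pure-state decomposition `ρ = Σ_j p_j |ψ_j⟩⟨ψ_j|`. -/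
def IsDecomposition (ρ : Matrix ι ι ℂ) (n : ℕ) (p : Fin n → ℝ) (ψ : Fin n → ι → ℂ) : Prop :=
  (∀ j, 0 < p j) ∧ (∑ j, p j = 1) ∧ (∀ j, ∑ i, Complex.normSq (ψ j i) = 1) ∧
    ρ = ∑ j, p j • outer (ψ j)

/-- `C_0(ρ) = min over decompositions of max_j log₂ T(ψ_j)`. -/
noncomputable def C0 (ρ : Matrix ι ι ℂ) : ℝ :=
  sInf { r | ∃ n p ψ, IsDecomposition ρ n p ψ ∧
    r = Real.logb 2 (↑(Finset.univ.sup fun j => T (ψ j)) : ℝ) }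

/-- Matrix square root of a positive semidefinite matrix (junk value `0` elsewhere). -/
noncomputable def msqrt (A : Matrix ι ι ℂ) : Matrix ι ι ℂ :=
  letI := Classical.propDecidable A.PosSemidef
  if h : A.PosSemidef then
    (h.1.eigenvectorUnitary : Matrix ι ι ℂ) *
      Matrix.diagonal (fun i => ((Real.sqrt (h.1.eigenvalues i) : ℝ) : ℂ)) *
      (star h.1.eigenvectorUnitary : Matrix ι ι ℂ)
  else 0

/-- Uhlmann fidelity `F(ρ,σ) = (Tr √(√ρ σ √ρ))²`. -/
noncomputable def Fid (ρ σ : Matrix ι ι ℂ) : ℝ :=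
  ((msqrt (msqrt ρ * σ * msqrt ρ)).trace.re) ^ 2

/-- Smoothed `C_max`. -/
noncomputable def Cmaxeps (ρ : Matrix ι ι ℂ) (ε : ℝ) : ℝ :=
  sInf { r | ∃ ρ', IsState ρ' ∧ 1 - ε ≤ Fid ρ ρ' ∧ r = Cmax ρ' }

/-- Smoothed `C_{Δ,max}`. -/
noncomputable def CDmaxeps (ρ : Matrix ι ι ℂ) (ε : ℝ) : ℝ :=
  sInf { r | ∃ ρ', IsState ρ' ∧ 1 - ε ≤ Fid ρ ρ' ∧ r = CDmax ρ' }

/-- Smoothed `C_0`. -/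
noncomputable def C0eps (ρ : Matrix ι ι ℂ) (ε : ℝ) : ℝ :=
  sInf { r | ∃ ρ', IsState ρ' ∧ 1 - ε ≤ Fid ρ ρ' ∧ r = C0 ρ' }

/-- The maximally coherent state `Ψ_M = |Ψ_M⟩⟨Ψ_M|` of dimension `M`. -/
noncomputable def PsiM (M : ℕ) : Matrix (Fin M) (Fin M) ℂ := Matrix.of fun _ _ => (1 : ℂ) / M

/-- One-shot coherence cost under MIO. -/
noncomputable def CMIOeps (ρ : Matrix ι ι ℂ) (ε : ℝ) : ℝ :=
  sInf { r | ∃ M : ℕ, 1 ≤ M ∧ r = Real.logb 2 M ∧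
    ∃ Λ : Matrix (Fin M) (Fin M) ℂ →ₗ[ℂ] Matrix ι ι ℂ, IsMIO Λ ∧ 1 - ε ≤ Fid ρ (Λ (PsiM M)) }

/-- One-shot coherence cost under DIO. -/
noncomputable def CDIOeps (ρ : Matrix ι ι ℂ) (ε : ℝ) : ℝ :=
  sInf { r | ∃ M : ℕ, 1 ≤ M ∧ r = Real.logb 2 M ∧
    ∃ Λ : Matrix (Fin M) (Fin M) ℂ →ₗ[ℂ] Matrix ι ι ℂ,
      CompletelyPositive Λ ∧ TracePreserving Λ ∧ (∀ ω, Λ (dephase ω) = dephase (Λ ω)) ∧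
      1 - ε ≤ Fid ρ (Λ (PsiM M)) }

/-- One-shot coherence cost under IO. -/
noncomputable def CIOeps (ρ : Matrix ι ι ℂ) (ε : ℝ) : ℝ :=
  sInf { r | ∃ M : ℕ, 1 ≤ M ∧ r = Real.logb 2 M ∧
    ∃ Λ : Matrix (Fin M) (Fin M) ℂ →ₗ[ℂ] Matrix ι ι ℂ, IsIO Λ ∧ 1 - ε ≤ Fid ρ (Λ (PsiM M)) }

/-- One-shot coherence cost under SIO. -/
noncomputable def CSIOeps (ρ : Matrix ι ι ℂ) (ε : ℝ) : ℝ :=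
  sInf { r | ∃ M : ℕ, 1 ≤ M ∧ r = Real.logb 2 M ∧
    ∃ Λ : Matrix (Fin M) (Fin M) ℂ →ₗ[ℂ] Matrix ι ι ℂ, IsSIO Λ ∧ 1 - ε ≤ Fid ρ (Λ (PsiM M)) }

/-- Matrix logarithm (base 2) via the spectral decomposition, with `log₂ 0 = 0` junk
convention on the kernel, and junk value `0` on non-Hermitian matrices. -/
noncomputable def mlog2 (A : Matrix ι ι ℂ) : Matrix ι ι ℂ :=
  letI := Classical.propDecidable A.IsHermitian
  if h : A.IsHermitian then
    (h.eigenvectorUnitary : Matrix ι ι ℂ) *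
      Matrix.diagonal (fun i => (Real.logb 2 (h.eigenvalues i) : ℂ)) *
      (h.eigenvectorUnitary : Matrix ι ι ℂ)ᴴ
  else 0

/-- The relative entropy of coherence `C_r(ρ) = min_{δ ∈ 𝓘} S(ρ‖δ)`, where the minimum
is (equivalently) restricted to those `δ` whose support contains the support of `ρ`,
on which `S(ρ‖δ) = Tr[ρ (log₂ ρ − log₂ δ)]` is finite. -/
noncomputable def Cr (ρ : Matrix ι ι ℂ) : ℝ :=
  sInf { r | ∃ δ, IsIncoherent δ ∧ (∀ v : ι → ℂ, δ.mulVec v = 0 → ρ.mulVec v = 0) ∧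
    r = ((ρ * (mlog2 ρ - mlog2 δ)).trace).re }

/-- Von Neumann entropy (base 2). -/
noncomputable def vN (σ : Matrix ι ι ℂ) : ℝ := -((σ * mlog2 σ).trace.re)

/-- The coherence of formation. -/
noncomputable def Cf (ρ : Matrix ι ι ℂ) : ℝ :=
  sInf { r | ∃ n p ψ, IsDecomposition ρ n p ψ ∧
    r = ∑ j, p j * vN (dephase (outer (ψ j))) }

/-- The set `A_ρ = { (1/t)[(1+t)Δ(ρ) − ρ] : t > 0, (1+t)Δ(ρ) − ρ ≥ 0 }`. -/
def Aset (ρ : Matrix ι ι ℂ) : Set (Matrix ι ι ℂ) :=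
  { σ | ∃ t : ℝ, 0 < t ∧ ((1 + t) • dephase ρ - ρ).PosSemidef ∧
      σ = t⁻¹ • ((1 + t) • dephase ρ - ρ) }

/-- The `n`-fold tensor power `ρ^{⊗ n}`. -/
def tpow (ρ : Matrix ι ι ℂ) (n : ℕ) : Matrix (Fin n → ι) (Fin n → ι) ℂ :=
  Matrix.of fun i j => ∏ t, ρ (i t) (j t)

set_option linter.unusedSectionVars false in
lemma rsmul_eq (c : ℝ) (A : Matrix ι ι ℂ) : c • A = (c : ℂ) • A := by
  ext i j; simp [Complex.real_smul]

lemma psd_rsmul {A : Matrix ι ι ℂ} (hA : A.PosSemidef) {c : ℝ} (hc : 0 ≤ c) :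
    (c • A).PosSemidef := by
  rw [rsmul_eq]
  constructor
  · unfold Matrix.IsHermitian
    rw [Matrix.conjTranspose_smul, hA.1.eq]
    norm_num
  · exact (hA.smul (by exact_mod_cast hc : (0:ℂ) ≤ (c:ℂ))).2

lemma psd_sum {m : Type*} [Fintype m] (A : m → Matrix ι ι ℂ)
    (hA : ∀ i, (A i).PosSemidef) : (∑ i, A i).PosSemidef := by
  classical
  refine Finset.sum_induction A _ (fun a b ha hb => ha.add hb) Matrix.PosSemidef.zero
    (fun i _ => hA i)

lemma psd_diag_nonneg {A : Matrix ι ι ℂ} (hA : A.PosSemidef) (i : ι) : 0 ≤ A i i := by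
  exact hA.diag_nonneg

lemma psd_trace_nonneg {A : Matrix ι ι ℂ} (hA : A.PosSemidef) : 0 ≤ A.trace :=
  Finset.sum_nonneg fun i _ => psd_diag_nonneg hA i

lemma trace_eq_sum_eig {A : Matrix ι ι ℂ} (hA : A.IsHermitian) :
    A.trace = ∑ i, (hA.eigenvalues i : ℂ) := by
  exact hA.trace_eq_sum_eigenvalues

lemma one_sub_psd {ρ : Matrix ι ι ℂ} (h : IsState ρ) : ((1 : Matrix ι ι ℂ) - ρ).PosSemidef := by
  obtain ⟨hpsd, htr⟩ := h
  have hH := hpsd.1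
  have hsum : ∑ j, hH.eigenvalues j = 1 := by
    have h1 := trace_eq_sum_eig hH
    rw [htr] at h1
    have h2 := congrArg Complex.re h1
    simpa using h2.symm
  have heig : ∀ i, hH.eigenvalues i ≤ 1 := fun i => by
    calc hH.eigenvalues i ≤ ∑ j, hH.eigenvalues j :=
          Finset.single_le_sum (fun j _ => hpsd.eigenvalues_nonneg j) (Finset.mem_univ i)
    _ = 1 := hsum
  have hU : (hH.eigenvectorUnitary : Matrix ι ι ℂ) * star (hH.eigenvectorUnitary : Matrix ι ι ℂ) = 1 :=
    Unitary.coe_mul_star_self _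
  have key : (1 : Matrix ι ι ℂ) - ρ =
      (hH.eigenvectorUnitary : Matrix ι ι ℂ) *
        Matrix.diagonal (fun i => ((1 - hH.eigenvalues i : ℝ) : ℂ)) *
        ((hH.eigenvectorUnitary : Matrix ι ι ℂ))ᴴ := by
    have : Matrix.diagonal (fun i => ((1 - hH.eigenvalues i : ℝ) : ℂ)) =
        1 - Matrix.diagonal (RCLike.ofReal ∘ hH.eigenvalues) := by
      rw [← Matrix.diagonal_one, Matrix.diagonal_sub]
      congr 1
      ext i
      push_cast
      simp
    rw [this, Matrix.mul_sub, Matrix.sub_mul, mul_one, ← Matrix.star_eq_conjTranspose, hU]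
    congr 1
    exact hH.spectral_theorem.trans (Unitary.conjStarAlgAut_apply _ _)
  rw [key]
  exact Matrix.PosSemidef.mul_mul_conjTranspose_same
    (Matrix.PosSemidef.diagonal fun i => by
      rw [Complex.le_def]
      simp [sub_nonneg, heig i]) _


/-- the feasible set for `Cmax` -/
def Sset (ρ : Matrix ι ι ℂ) : Set ℝ :=
  {l : ℝ | 0 ≤ l ∧ ∃ δ, IsIncoherent δ ∧ (l • δ - ρ).PosSemidef}

lemma Sset_bddBelow (ρ : Matrix ι ι ℂ) : BddBelow (Sset ρ) := ⟨0, fun _ hx => hx.1⟩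

lemma card_mem_Sset [Nonempty ι] {ρ : Matrix ι ι ℂ} (h : IsState ρ) :
    (Fintype.card ι : ℝ) ∈ Sset ρ := by
  have hc0 : (0:ℝ) < (Fintype.card ι : ℝ) := by positivity
  refine ⟨le_of_lt hc0, Matrix.diagonal (fun _ => (((Fintype.card ι : ℝ)⁻¹ : ℝ) : ℂ)),
    ⟨⟨?_, ?_⟩, ?_⟩, ?_⟩
  · exact Matrix.PosSemidef.diagonal fun i => by
      rw [Complex.le_def]; simp
  · rw [Matrix.trace_diagonal, Finset.sum_const]
    push_cast
    field_simp
    rw [Finset.card_univ, nsmul_eq_mul]; field_simp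
  · exact Matrix.isDiag_diagonal _
  · have h1 : (Fintype.card ι : ℝ) •
        Matrix.diagonal (fun _ : ι => (((Fintype.card ι : ℝ)⁻¹ : ℝ) : ℂ)) = 1 := by
      have hcne : ((Fintype.card ι : ℝ) : ℂ) ≠ 0 := by exact_mod_cast ne_of_gt hc0
      ext i k
      by_cases hik : i = k
      · subst hik
        simp [Matrix.one_apply, Matrix.diagonal_apply, Complex.real_smul]
      · simp [Matrix.one_apply, Matrix.diagonal_apply, hik, Complex.real_smul]
    rw [h1]
    exact one_sub_psd h

lemma mem_Sset_ge_one {ρ : Matrix ι ι ℂ} (hρ : ρ.trace = 1) {l : ℝ}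
    (hl : l ∈ Sset ρ) : 1 ≤ l := by
  obtain ⟨hl0, δ, hδ, hpsd⟩ := hl
  have htr : (l • δ - ρ).trace = ((l - 1 : ℝ) : ℂ) := by
    rw [Matrix.trace_sub, hρ, rsmul_eq, Matrix.trace_smul, hδ.1.2]
    push_cast [smul_eq_mul]; ring
  have h0 := psd_trace_nonneg hpsd
  rw [htr, Complex.le_def] at h0
  simp only [Complex.zero_re, Complex.ofReal_re] at h0
  linarith [h0.1]


/-- `C_max` is quasiconvex. -/
theorem Cmax_quasiconvex {d : ℕ} (n : ℕ) (hn : 0 < n) (p : Fin n → ℝ)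
    (ρ : Fin n → Matrix (Fin d) (Fin d) ℂ)
    (hp : ∀ i, 0 ≤ p i) (hp1 : ∑ i, p i = 1) (hρ : ∀ i, IsState (ρ i)) :
    Cmax (∑ i, p i • ρ i) ≤
      Finset.univ.sup' ⟨⟨0, hn⟩, Finset.mem_univ _⟩ (fun i => Cmax (ρ i)) := by
  classical
  rcases Nat.eq_zero_or_pos d with hd | hd
  · exfalso
    have h1 := (hρ ⟨0, hn⟩).2
    subst hd
    simp [Matrix.trace, Matrix.diag] at h1
  have : Nonempty (Fin d) := ⟨⟨0, hd⟩⟩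
  set rS : Matrix (Fin d) (Fin d) ℂ := ∑ i, p i • ρ i with hrS
  have hstate : IsState rS := by
    constructor
    · exact psd_sum _ fun i => psd_rsmul (hρ i).1 (hp i)
    · rw [Matrix.trace_sum]
      have h2 : ∀ i, (p i • ρ i).trace = ((p i : ℝ) : ℂ) := fun i => by
        rw [rsmul_eq, Matrix.trace_smul, (hρ i).2, smul_eq_mul, mul_one]
      rw [Finset.sum_congr rfl fun i _ => h2 i, ← Complex.ofReal_sum, hp1,
        Complex.ofReal_one]
  have hne : (Finset.univ : Finset (Fin n)).Nonempty := ⟨⟨0, hn⟩, Finset.mem_univ _⟩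
  obtain ⟨j, -, hj⟩ := Finset.exists_mem_eq_sup' hne (fun i : Fin n => sInf (Sset (ρ i)))
  have hub : ∀ i, sInf (Sset (ρ i)) ≤ sInf (Sset (ρ j)) := fun i => by
    rw [← hj]; exact Finset.le_sup' (fun i : Fin n => sInf (Sset (ρ i))) (Finset.mem_univ i)
  have hge1 : ∀ i : Fin n, (1:ℝ) ≤ sInf (Sset (ρ i)) := fun i =>
    le_csInf ⟨_, card_mem_Sset (hρ i)⟩ fun l hl => mem_Sset_ge_one (hρ i).2 hl
  -- main estimate
  have hmain : sInf (Sset rS) ≤ sInf (Sset (ρ j)) := by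
    refine le_of_forall_pos_le_add fun ε hε => ?_
    have hpick : ∀ i : Fin n, ∃ l ∈ Sset (ρ i), l < sInf (Sset (ρ i)) + ε := fun i =>
      exists_lt_of_csInf_lt ⟨_, card_mem_Sset (hρ i)⟩ (by linarith)
    choose l hlmem hllt using hpick
    have hl1 : ∀ i, (1:ℝ) ≤ l i := fun i => mem_Sset_ge_one (hρ i).2 (hlmem i)
    choose δ hδinc hδpsd using fun i => (hlmem i).2
    set c : ℝ := ∑ i, p i * l i with hc
    have hc1 : (1:ℝ) ≤ c := by
      calc (1:ℝ) = ∑ i, p i * 1 := by simp [hp1]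
      _ ≤ ∑ i, p i * l i := Finset.sum_le_sum fun i _ => by
            exact mul_le_mul_of_nonneg_left (hl1 i) (hp i)
    have hc0 : (0:ℝ) < c := by linarith
    have hcle : c ≤ sInf (Sset (ρ j)) + ε := by
      calc c ≤ ∑ i, p i * (sInf (Sset (ρ j)) + ε) := Finset.sum_le_sum fun i _ =>
            mul_le_mul_of_nonneg_left
              (le_of_lt (lt_of_lt_of_le (hllt i) (by linarith [hub i]))) (hp i)
      _ = sInf (Sset (ρ j)) + ε := by rw [← Finset.sum_mul, hp1, one_mul]
    -- the mixed incoherent state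
    set δc : Matrix (Fin d) (Fin d) ℂ := c⁻¹ • ∑ i, (p i * l i) • δ i with hδc
    have hsmul : c • δc = ∑ i, (p i * l i) • δ i := by
      rw [hδc, smul_smul, mul_inv_cancel₀ (ne_of_gt hc0), one_smul]
    have hmem : c ∈ Sset rS := by
      refine ⟨le_of_lt hc0, δc, ⟨⟨?_, ?_⟩, ?_⟩, ?_⟩
      · exact psd_rsmul (psd_sum _ fun i =>
          psd_rsmul (hδinc i).1.1 (mul_nonneg (hp i) (le_trans zero_le_one (hl1 i))))
          (inv_nonneg.mpr (le_of_lt hc0))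
      · rw [hδc, rsmul_eq, Matrix.trace_smul, Matrix.trace_sum]
        have h3 : ∀ i, ((p i * l i : ℝ) • δ i).trace = ((p i * l i : ℝ) : ℂ) := fun i => by
          rw [rsmul_eq, Matrix.trace_smul, (hδinc i).1.2, smul_eq_mul, mul_one]
        rw [Finset.sum_congr rfl fun i _ => h3 i, ← Complex.ofReal_sum, ← hc,
          smul_eq_mul, ← Complex.ofReal_mul,
          inv_mul_cancel₀ (ne_of_gt hc0), Complex.ofReal_one]
      · intro a b hab
        rw [hδc]
        simp only [Matrix.smul_apply, Matrix.sum_apply]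
        rw [Finset.sum_eq_zero fun i _ => by
          rw [(hδinc i).2 hab, smul_zero]]
        rw [smul_zero]
      · have key : c • δc - rS = ∑ i, p i • (l i • δ i - ρ i) := by
          rw [hsmul, hrS, ← Finset.sum_sub_distrib]
          refine Finset.sum_congr rfl fun i _ => ?_
          rw [smul_sub, smul_smul]
        rw [key]
        exact psd_sum _ fun i => psd_rsmul (hδpsd i) (hp i)
    exact le_trans (csInf_le (Sset_bddBelow _) hmem) hcle
  -- conclude
  have hpos : (0:ℝ) < sInf (Sset rS) :=
    lt_of_lt_of_le one_pos (le_csInf ⟨_, card_mem_Sset hstate⟩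
      fun l hl => mem_Sset_ge_one hstate.2 hl)
  have hCmaxS : Cmax rS = Real.logb 2 (sInf (Sset rS)) := rfl
  have hCmaxj : Cmax (ρ j) = Real.logb 2 (sInf (Sset (ρ j))) := rfl
  calc Cmax rS ≤ Cmax (ρ j) := by
        rw [hCmaxS, hCmaxj]
        exact Real.logb_le_logb_of_le (by norm_num) hpos hmain
  _ ≤ Finset.univ.sup' ⟨⟨0, hn⟩, Finset.mem_univ _⟩ (fun i => Cmax (ρ i)) :=
        Finset.le_sup' (fun i => Cmax (ρ i)) (Finset.mem_univ j)

end OneShot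
end

section
/- C_{Δ,max} is monotone under dephasing-covariant incoherent operations: if Λ is a completely positive trace-preserving map on d×d complex matrices satisfying Λ(Δ(ρ)) = Δ(Λ(ρ)) for all states ρ, then for every state ρ one has C_{Δ,max}(Λ(ρ)) ≤ C_{Δ,max}(ρ). -/
open scoped Matrix ComplexOrder

namespace OneShot

variable {ι κ : Type*} [Fintype ι] [DecidableEq ι] [Fintype κ] [DecidableEq κ]

set_option linter.unusedSectionVars false in
lemma cp_posSemidef {Λ : Matrix ι ι ℂ →ₗ[ℂ] Matrix κ κ ℂ} (hCP : CompletelyPositive Λ)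
    {A : Matrix ι ι ℂ} (hA : A.PosSemidef) : (Λ A).PosSemidef := by
  have h1 : ((A.submatrix (Prod.snd : Fin 1 × ι → ι) Prod.snd)).PosSemidef := hA.submatrix _
  have h2 := hCP 1 _ h1
  have h3 : (Matrix.of fun p q : Fin 1 × κ => Λ A p.2 q.2).PosSemidef := h2
  have h4 : Λ A = (Matrix.of fun p q : Fin 1 × κ => Λ A p.2 q.2).submatrix
      (fun i => ((0 : Fin 1), i)) (fun i => ((0 : Fin 1), i)) := by
    ext i j; rfl
  rw [h4]; exact h3.submatrix _

set_option linter.unusedSectionVars false in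
lemma dephase_hermitian {ρ : Matrix ι ι ℂ} (hρ : ρ.IsHermitian) : (dephase ρ).IsHermitian := by
  rw [dephase, Matrix.isHermitian_diagonal_iff]
  exact fun i => hρ.apply i i

set_option linter.unusedSectionVars false in
lemma smul_dephase_sub_hermitian {ρ : Matrix ι ι ℂ} (hρ : ρ.IsHermitian) (c : ℝ) :
    ((c : ℝ) • dephase ρ - ρ).IsHermitian := by
  have h1 : (c : ℝ) • dephase ρ = ((c : ℂ)) • dephase ρ := by
    ext i j; simp [Complex.real_smul]
  rw [Matrix.IsHermitian, Matrix.conjTranspose_sub, h1, Matrix.conjTranspose_smul,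
    Complex.star_def, Complex.conj_ofReal, (dephase_hermitian hρ).eq, hρ.eq]

set_option linter.unusedSectionVars false in
lemma card_smul_dephase_sub_posSemidef {ρ : Matrix ι ι ℂ} (hρ : ρ.PosSemidef) :
    ((Fintype.card ι : ℝ) • dephase ρ - ρ).PosSemidef := by
  obtain ⟨B, hB⟩ : ∃ B : Matrix ι ι ℂ, ρ = Bᴴ * B :=
    by open scoped MatrixOrder in exact CStarAlgebra.nonneg_iff_eq_star_mul_self.mp hρ.nonneg
  refine Matrix.PosSemidef.of_dotProduct_mulVec_nonneg (smul_dephase_sub_hermitian hρ.1 _) fun x => ?_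
  have key1 : dotProduct (star x) ((dephase ρ).mulVec x)
      = ((∑ i, (ρ i i).re * Complex.normSq (x i) : ℝ) : ℂ) := by
    push_cast
    simp only [dephase, dotProduct, Matrix.mulVec_diagonal, Pi.star_apply]
    refine Finset.sum_congr rfl fun i _ => ?_
    have hr := Complex.conj_eq_iff_re.mp (hρ.1.apply i i)
    calc star (x i) * (ρ i i * x i) = ρ i i * (star (x i) * x i) := by ring
      _ = ((ρ i i).re : ℂ) * ((Complex.normSq (x i) : ℝ) : ℂ) := by
          rw [hr, Complex.normSq_eq_conj_mul_self, Complex.star_def]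
  have key2 : dotProduct (star x) (ρ.mulVec x)
      = ((∑ k, Complex.normSq (B.mulVec x k) : ℝ) : ℂ) := by
    rw [hB, ← Matrix.mulVec_mulVec, Matrix.dotProduct_mulVec, Matrix.vecMul_conjTranspose,
      star_star]
    push_cast
    simp only [dotProduct, Pi.star_apply]
    exact Finset.sum_congr rfl fun k _ => by
      rw [Complex.normSq_eq_conj_mul_self, Complex.star_def]
  have hdig : ∀ i, (ρ i i).re = ∑ k, Complex.normSq (B k i) := by
    intro i
    have h : ρ i i = ((∑ k, Complex.normSq (B k i) : ℝ) : ℂ) := by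
      rw [hB]
      push_cast
      simp only [Matrix.mul_apply, Matrix.conjTranspose_apply]
      exact Finset.sum_congr rfl fun k _ => by
        rw [Complex.normSq_eq_conj_mul_self, Complex.star_def]
    rw [h]; simp
  rw [Matrix.sub_mulVec, dotProduct_sub, Matrix.smul_mulVec,
    dotProduct_smul, key1, key2]
  have hineq : (∑ k, Complex.normSq (B.mulVec x k))
      ≤ (Fintype.card ι : ℝ) * ∑ i, (ρ i i).re * Complex.normSq (x i) := by
    have step1 : ∀ k, Complex.normSq (B.mulVec x k)
        ≤ (Fintype.card ι : ℝ) * ∑ i, Complex.normSq (B k i) * Complex.normSq (x i) := by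
      intro k
      have h1 : ‖B.mulVec x k‖ ≤ ∑ i, ‖B k i * x i‖ := by
        simpa [Matrix.mulVec, dotProduct] using
          (norm_sum_le Finset.univ (fun i => B k i * x i))
      have h2 : Complex.normSq (B.mulVec x k) ≤ (∑ i, ‖B k i * x i‖) ^ 2 := by
        rw [← Complex.sq_norm]
        exact pow_le_pow_left₀ (norm_nonneg _) h1 2
      refine h2.trans ?_
      have h3 := sq_sum_le_card_mul_sum_sq (s := (Finset.univ : Finset ι))
        (f := fun i => ‖B k i * x i‖)
      simpa [Complex.sq_norm, Complex.normSq_mul, mul_pow, Finset.card_univ] using h3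
    calc (∑ k, Complex.normSq (B.mulVec x k))
        ≤ ∑ k, (Fintype.card ι : ℝ) * ∑ i, Complex.normSq (B k i) * Complex.normSq (x i) :=
          Finset.sum_le_sum fun k _ => step1 k
      _ = (Fintype.card ι : ℝ) * ∑ i, (ρ i i).re * Complex.normSq (x i) := by
          rw [← Finset.mul_sum, Finset.sum_comm]
          congr 1
          refine Finset.sum_congr rfl fun i _ => ?_
          rw [hdig i, Finset.sum_mul]
  rw [Complex.real_smul, ← Complex.ofReal_mul, ← Complex.ofReal_sub, Complex.zero_le_real]
  linarith

set_option linter.unusedSectionVars false in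
lemma trace_nonneg_of_posSemidef {M : Matrix ι ι ℂ} (hM : M.PosSemidef) : 0 ≤ M.trace := by
  have h : ∀ i, 0 ≤ M i i := by
    intro i
    exact hM.diag_nonneg
  exact Finset.sum_nonneg fun i _ => h i

set_option linter.unusedSectionVars false in
lemma one_le_of_mem {σ : Matrix ι ι ℂ} (hσ : IsState σ) {l : ℝ}
    (hl : (l • dephase σ - σ).PosSemidef) : 1 ≤ l := by
  have htr : (l • dephase σ - σ).trace = ((l - 1 : ℝ) : ℂ) := by
    have hdp : (dephase σ).trace = 1 := by
      rw [dephase, Matrix.trace_diagonal, ← hσ.2, Matrix.trace]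
      rfl
    rw [Matrix.trace_sub, Matrix.trace_smul, hdp, hσ.2]
    push_cast [Complex.real_smul]
    ring
  have h0 := trace_nonneg_of_posSemidef hl
  rw [htr, Complex.zero_le_real] at h0
  linarith

set_option linter.unusedSectionVars false in
lemma real_smul_matrix (l : ℝ) (M : Matrix ι ι ℂ) : l • M = ((l : ℂ)) • M := by
  ext i j; simp [Complex.real_smul]

/-- `C_{Δ,max}` is monotone under dephasing-covariant incoherent operations. -/
theorem CDmax_DIO_monotone {d : ℕ}
    (Λ : Matrix (Fin d) (Fin d) ℂ →ₗ[ℂ] Matrix (Fin d) (Fin d) ℂ)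
    (hCP : CompletelyPositive Λ) (hTP : TracePreserving Λ)
    (hcov : ∀ ρ : Matrix (Fin d) (Fin d) ℂ, IsState ρ → Λ (dephase ρ) = dephase (Λ ρ))
    (ρ : Matrix (Fin d) (Fin d) ℂ) (hρ : IsState ρ) :
    CDmax (Λ ρ) ≤ CDmax ρ := by
  have hstateΛ : IsState (Λ ρ) := ⟨cp_posSemidef hCP hρ.1, by rw [hTP]; exact hρ.2⟩
  have hsub : {l : ℝ | 0 ≤ l ∧ (l • dephase ρ - ρ).PosSemidef} ⊆
      {l : ℝ | 0 ≤ l ∧ (l • dephase (Λ ρ) - Λ ρ).PosSemidef} := by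
    rintro l ⟨hl0, hpsd⟩
    refine ⟨hl0, ?_⟩
    have h1 : Λ (l • dephase ρ - ρ) = l • dephase (Λ ρ) - Λ ρ := by
      rw [real_smul_matrix, real_smul_matrix, map_sub, map_smul, hcov ρ hρ]
    exact h1 ▸ cp_posSemidef hCP hpsd
  have hne : {l : ℝ | 0 ≤ l ∧ (l • dephase ρ - ρ).PosSemidef}.Nonempty :=
    ⟨(Fintype.card (Fin d) : ℝ), ⟨Nat.cast_nonneg _, card_smul_dephase_sub_posSemidef hρ.1⟩⟩
  have hbdd : BddBelow {l : ℝ | 0 ≤ l ∧ (l • dephase (Λ ρ) - Λ ρ).PosSemidef} :=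
    ⟨0, fun l hl => hl.1⟩
  have hmain := csInf_le_csInf hbdd hne hsub
  have h1le : 1 ≤ sInf {l : ℝ | 0 ≤ l ∧ (l • dephase (Λ ρ) - Λ ρ).PosSemidef} :=
    le_csInf (hne.mono hsub) fun l hl => one_le_of_mem hstateΛ hl.2
  exact Real.logb_le_logb_of_le one_lt_two (lt_of_lt_of_le one_pos h1le) hmain


end OneShot
end

section
/- C_0 violates convexity: in dimension d = 3, for ρ₁ = (1/3)(|0⟩+|1⟩+|2⟩)(⟨0|+⟨1|+⟨2|), ρ₂ = (1/3)(|0⟩⟨0|+|1⟩⟨1|+|2⟩⟨2|), and ρ = (1/2)ρ₁ + (1/2)ρ₂, one has (1/2)C_0(ρ₁) + (1/2)C_0(ρ₂) = (1/2)log₂3 < log₂2 ≤ C_0(ρ); in particular C_0(ρ) > (1/2)C_0(ρ₁) + (1/2)C_0(ρ₂). -/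
open scoped Matrix ComplexOrder

namespace OneShot

variable {ι κ : Type*} [Fintype ι] [DecidableEq ι] [Fintype κ] [DecidableEq κ]

/-- `ρ₁ = (1/3)(|0⟩+|1⟩+|2⟩)(⟨0|+⟨1|+⟨2|)`. -/
noncomputable def rho1 : Matrix (Fin 3) (Fin 3) ℂ := Matrix.of fun _ _ => 1 / 3

/-- `ρ₂ = (1/3)(|0⟩⟨0|+|1⟩⟨1|+|2⟩⟨2|)`. -/
noncomputable def rho2 : Matrix (Fin 3) (Fin 3) ℂ := (1 / 3 : ℂ) • 1

/-- `ρ = (1/2)ρ₁ + (1/2)ρ₂`. -/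
noncomputable def rhoMix : Matrix (Fin 3) (Fin 3) ℂ := (1 / 2 : ℂ) • rho1 + (1 / 2 : ℂ) • rho2

section Aux

/-- Entry of a mixture of outer products. -/
lemma decomp_entry {n : ℕ} (p : Fin n → ℝ) (ψ : Fin n → Fin 3 → ℂ) (a b : Fin 3) :
    (∑ j, p j • outer (ψ j)) a b = ∑ j, (p j : ℂ) * (ψ j a * (starRingEnd ℂ) (ψ j b)) := by
  simp [outer, Matrix.sum_apply, Complex.real_smul]

lemma decomp_n_pos {ρ : Matrix (Fin 3) (Fin 3) ℂ} {n : ℕ} {p : Fin n → ℝ}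
    {ψ : Fin n → Fin 3 → ℂ} (hd : IsDecomposition ρ n p ψ) : 0 < n := by
  rcases Nat.eq_zero_or_pos n with h | h
  · exfalso; have := hd.2.1; subst h; simp at this
  · exact h

lemma T_pos {n : ℕ} {p : Fin n → ℝ} {ψ : Fin n → Fin 3 → ℂ}
    {ρ : Matrix (Fin 3) (Fin 3) ℂ} (hd : IsDecomposition ρ n p ψ) (j : Fin n) :
    1 ≤ T (ψ j) := by
  have hnorm := hd.2.2.1 j
  have : ∃ i, ψ j i ≠ 0 := by
    by_contra h
    push_neg at h
    simp [h] at hnorm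
  obtain ⟨i, hi⟩ := this
  have : i ∈ Finset.univ.filter fun i => ψ j i ≠ 0 := by simp [hi]
  exact Finset.card_pos.mpr ⟨i, this⟩

/-- In any decomposition of `rho1`, all coordinates of each `ψ j` coincide. -/
lemma rho1_coords_eq {n : ℕ} {p : Fin n → ℝ} {ψ : Fin n → Fin 3 → ℂ}
    (hd : IsDecomposition rho1 n p ψ) (a b : Fin 3) (j : Fin n) : ψ j a = ψ j b := by
  obtain ⟨hp, hs, hnorm, hρ⟩ := hd
  have hE : (0 : ℂ) = ∑ j, ((p j * Complex.normSq (ψ j a - ψ j b) : ℝ) : ℂ) := by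
    have h0 : rho1 a a - rho1 a b - rho1 b a + rho1 b b = 0 := by
      simp [rho1]
    calc (0 : ℂ) = rho1 a a - rho1 a b - rho1 b a + rho1 b b := h0.symm
      _ = ∑ j, ((p j * Complex.normSq (ψ j a - ψ j b) : ℝ) : ℂ) := by
          rw [hρ, decomp_entry, decomp_entry, decomp_entry, decomp_entry,
            ← Finset.sum_sub_distrib, ← Finset.sum_sub_distrib, ← Finset.sum_add_distrib]
          refine Finset.sum_congr rfl fun j _ => ?_
          rw [Complex.ofReal_mul, ← Complex.mul_conj, map_sub]
          ring
  rw [← Complex.ofReal_sum] at hE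
  have hsum : (∑ j, p j * Complex.normSq (ψ j a - ψ j b)) = 0 := by
    exact_mod_cast hE.symm
  have := (Finset.sum_eq_zero_iff_of_nonneg fun j _ =>
    mul_nonneg (hp j).le (Complex.normSq_nonneg _)).mp hsum j (Finset.mem_univ j)
  have hns : Complex.normSq (ψ j a - ψ j b) = 0 :=
    (mul_eq_zero.mp this).resolve_left (ne_of_gt (hp j))
  exact sub_eq_zero.mp (Complex.normSq_eq_zero.mp hns)

lemma sqrt3_sq : ((Real.sqrt 3)⁻¹ : ℝ) * (Real.sqrt 3)⁻¹ = 1 / 3 := by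
  rw [← mul_inv, Real.mul_self_sqrt (by norm_num)]
  norm_num

/-- Uniform superposition vector. -/
noncomputable def uvec : Fin 3 → ℂ := fun _ => Complex.ofReal ((Real.sqrt 3)⁻¹)

/-- Basis vector. -/
def evec (k : Fin 3) : Fin 3 → ℂ := fun i => if i = k then 1 else 0

lemma uvec_norm : ∑ i, Complex.normSq (uvec i) = 1 := by
  simp only [uvec, Complex.normSq_ofReal, Fin.sum_univ_three]
  linarith [sqrt3_sq]

lemma uvec_prod : (uvec 0 : ℂ) * (starRingEnd ℂ) (uvec 0) = 1 / 3 := by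
  rw [show (uvec 0 : ℂ) = Complex.ofReal ((Real.sqrt 3)⁻¹) from rfl,
    Complex.conj_ofReal, ← Complex.ofReal_mul, sqrt3_sq]
  norm_num

lemma uvec_sq : (Complex.ofReal ((Real.sqrt 3)⁻¹)) ^ 2 = 1 / 3 := by
  rw [sq, ← Complex.ofReal_mul, sqrt3_sq]
  norm_num

lemma uvec_mul : (Complex.ofReal ((Real.sqrt 3)⁻¹)) * (Complex.ofReal ((Real.sqrt 3)⁻¹)) = 1 / 3 := by
  rw [← Complex.ofReal_mul, sqrt3_sq]
  norm_num

lemma uvec_mul' : ((Real.sqrt 3 : ℝ) : ℂ)⁻¹ * ((Real.sqrt 3 : ℝ) : ℂ)⁻¹ = 1 / 3 := by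
  rw [← Complex.ofReal_inv, ← Complex.ofReal_mul, sqrt3_sq]
  norm_num

lemma evec_norm (k : Fin 3) : ∑ i, Complex.normSq (evec k i) = 1 := by
  fin_cases k <;> simp [evec, Fin.sum_univ_three]

/-- The uniform vector is a decomposition of rho1. -/
lemma rho1_decomp : IsDecomposition rho1 1 (fun _ => 1) (fun _ => uvec) := by
  refine ⟨fun _ => one_pos, by simp, fun _ => uvec_norm, ?_⟩
  ext a b
  rw [decomp_entry, Fin.sum_univ_one]
  have : (uvec a : ℂ) * (starRingEnd ℂ) (uvec b) = 1 / 3 := uvec_prod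
  rw [this]
  simp [rho1]

lemma T_uniform : T uvec = 3 := by
  have h : (Complex.ofReal ((Real.sqrt 3)⁻¹)) ≠ 0 := by
    simp only [ne_eq, Complex.ofReal_eq_zero, inv_eq_zero]
    positivity
  simp [T, uvec, h]

/-- C₀(ρ₁) = log₂ 3. -/
lemma C0_rho1 : C0 rho1 = Real.logb 2 3 := by
  have hlb : ∀ r ∈ { r | ∃ n p ψ, IsDecomposition rho1 n p ψ ∧
      r = Real.logb 2 (↑(Finset.univ.sup fun j => T (ψ j)) : ℝ) }, Real.logb 2 3 ≤ r := by
    rintro r ⟨n, p, ψ, hd, rfl⟩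
    have hn : 0 < n := decomp_n_pos hd
    have j : Fin n := ⟨0, hn⟩
    have hT : T (ψ j) = 3 := by
      have hcoords : ∀ i, ψ j i = ψ j 0 := fun i => rho1_coords_eq hd i 0 j
      have h0 : ψ j 0 ≠ 0 := by
        intro h
        have hnorm := hd.2.2.1 j
        rw [Fin.sum_univ_three, hcoords 1, hcoords 2, h] at hnorm
        simp at hnorm
      have : ∀ i, ψ j i ≠ 0 := fun i => by rw [hcoords i]; exact h0
      simp [T, this]
    have hsup : 3 ≤ Finset.univ.sup fun j => T (ψ j) := by
      have h := Finset.le_sup (f := fun j => T (ψ j)) (Finset.mem_univ j)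
      simpa [hT] using h
    have : (3 : ℝ) ≤ (↑(Finset.univ.sup fun j => T (ψ j)) : ℝ) := by exact_mod_cast hsup
    exact Real.logb_le_logb_of_le (by norm_num) (by norm_num) this
  have hmem : Real.logb 2 3 ∈ { r | ∃ n p ψ, IsDecomposition rho1 n p ψ ∧
      r = Real.logb 2 (↑(Finset.univ.sup fun j => T (ψ j)) : ℝ) } := by
    refine ⟨1, _, _, rho1_decomp, ?_⟩
    simp [T_uniform]
  exact le_antisymm (csInf_le ⟨Real.logb 2 3, hlb⟩ hmem) (le_csInf ⟨_, hmem⟩ hlb)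

/-- The standard basis decomposition of rho2. -/
lemma rho2_decomp : IsDecomposition rho2 3 (fun _ => 1 / 3) evec := by
  refine ⟨fun _ => by norm_num, by norm_num [Fin.sum_univ_three], evec_norm, ?_⟩
  ext a b
  rw [decomp_entry]
  fin_cases a <;> fin_cases b <;>
    simp [rho2, evec, Matrix.one_apply, Fin.sum_univ_three]

lemma T_basis (j : Fin 3) : T (evec j) = 1 := by
  fin_cases j <;> simp [T, evec] <;> decide

lemma C0_nonneg_elem {ρ : Matrix (Fin 3) (Fin 3) ℂ} :
    ∀ r ∈ { r | ∃ n p ψ, IsDecomposition ρ n p ψ ∧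
      r = Real.logb 2 (↑(Finset.univ.sup fun j => T (ψ j)) : ℝ) }, (0 : ℝ) ≤ r := by
  rintro r ⟨n, p, ψ, hd, rfl⟩
  have hn : 0 < n := decomp_n_pos hd
  have j : Fin n := ⟨0, hn⟩
  have hsup : 1 ≤ Finset.univ.sup fun j => T (ψ j) :=
    le_trans (T_pos hd j) (Finset.le_sup (f := fun j => T (ψ j)) (Finset.mem_univ j))
  exact Real.logb_nonneg (by norm_num) (by exact_mod_cast hsup)

/-- C₀(ρ₂) = 0. -/
lemma C0_rho2 : C0 rho2 = 0 := by
  have hmem : (0 : ℝ) ∈ { r | ∃ n p ψ, IsDecomposition rho2 n p ψ ∧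
      r = Real.logb 2 (↑(Finset.univ.sup fun j => T (ψ j)) : ℝ) } := by
    refine ⟨3, _, _, rho2_decomp, ?_⟩
    have h1 : (Finset.univ.sup fun j : Fin 3 => T (evec j)) = 1 := by
      simp only [T_basis]
      exact Finset.sup_const ⟨0, Finset.mem_univ 0⟩ 1
    rw [h1]
    simp
  exact le_antisymm (csInf_le ⟨0, C0_nonneg_elem⟩ hmem) (le_csInf ⟨_, hmem⟩ C0_nonneg_elem)

/-- A decomposition of rhoMix. -/
lemma rhoMix_decomp :
    IsDecomposition rhoMix 4 ![1/2, 1/6, 1/6, 1/6] ![uvec, evec 0, evec 1, evec 2] := by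
  refine ⟨fun j => ?_, by norm_num [Fin.sum_univ_four, Matrix.cons_val_two, Matrix.cons_val_three, Matrix.tail_cons, Matrix.head_cons], fun j => ?_, ?_⟩
  · fin_cases j <;> norm_num
  · fin_cases j
    · exact uvec_norm
    · exact evec_norm 0
    · exact evec_norm 1
    · exact evec_norm 2
  · ext a b
    rw [decomp_entry, Fin.sum_univ_four]
    simp only [Matrix.cons_val_zero, Matrix.cons_val_one, Matrix.head_cons,
      Matrix.cons_val_two, Matrix.tail_cons, Matrix.cons_val_three]
    fin_cases a <;> fin_cases b <;>
      simp [rhoMix, rho1, rho2, uvec, evec, Matrix.one_apply, Complex.conj_ofReal,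
        uvec_mul'] <;>
      norm_num [uvec_mul']
/-- log₂ 2 ≤ C₀(ρ). -/
lemma C0_rhoMix_ge : Real.logb 2 2 ≤ C0 rhoMix := by
  have hmem : ∃ r, r ∈ { r | ∃ n p ψ, IsDecomposition rhoMix n p ψ ∧
      r = Real.logb 2 (↑(Finset.univ.sup fun j => T (ψ j)) : ℝ) } :=
    ⟨_, ⟨4, _, _, rhoMix_decomp, rfl⟩⟩
  refine le_csInf hmem ?_
  rintro r ⟨n, p, ψ, hd, rfl⟩
  obtain ⟨hp, hs, hnorm, hρ⟩ := hd
  have hentry : (∑ j, (p j : ℂ) * (ψ j 0 * (starRingEnd ℂ) (ψ j 1))) ≠ 0 := by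
    rw [← decomp_entry, ← hρ]
    simp [rhoMix, rho1, rho2, Matrix.one_apply]
  obtain ⟨j, -, hj⟩ := Finset.exists_ne_zero_of_sum_ne_zero hentry
  have h0 : ψ j 0 ≠ 0 := fun h => hj (by simp [h])
  have h1 : ψ j 1 ≠ 0 := fun h => hj (by simp [h])
  have hT : 2 ≤ T (ψ j) := by
    have hsub : ({0, 1} : Finset (Fin 3)) ⊆ Finset.univ.filter fun i => ψ j i ≠ 0 := by
      intro i hi
      simp only [Finset.mem_insert, Finset.mem_singleton] at hi
      rcases hi with rfl | rfl <;> simp [h0, h1]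
    calc (2 : ℕ) = ({0, 1} : Finset (Fin 3)).card := by decide
      _ ≤ _ := Finset.card_le_card hsub
  have hsup : 2 ≤ Finset.univ.sup fun j => T (ψ j) :=
    le_trans hT (Finset.le_sup (f := fun j => T (ψ j)) (Finset.mem_univ j))
  exact Real.logb_le_logb_of_le (by norm_num) (by norm_num) (by exact_mod_cast hsup)

end Aux

/-- `C_0` violates convexity. -/
theorem C0_not_convex :
    (1 / 2) * C0 rho1 + (1 / 2) * C0 rho2 = (1 / 2) * Real.logb 2 3 ∧
    (1 / 2) * Real.logb 2 3 < Real.logb 2 2 ∧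
    Real.logb 2 2 ≤ C0 rhoMix ∧
    (1 / 2) * C0 rho1 + (1 / 2) * C0 rho2 < C0 rhoMix := by
  have h1 : (1 / 2) * C0 rho1 + (1 / 2) * C0 rho2 = (1 / 2) * Real.logb 2 3 := by
    rw [C0_rho1, C0_rho2]; ring
  have h2 : (1 / 2) * Real.logb 2 3 < Real.logb 2 2 := by
    have h3 : Real.logb 2 3 < Real.logb 2 4 :=
      Real.logb_lt_logb (by norm_num) (by norm_num) (by norm_num)
    have h4 : Real.logb 2 4 = 2 := by
      rw [show (4 : ℝ) = 2 ^ (2 : ℕ) by norm_num, Real.logb_pow,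
        Real.logb_self_eq_one (by norm_num)]
      norm_num
    have h5 : Real.logb 2 2 = 1 := Real.logb_self_eq_one (by norm_num)
    linarith
  exact ⟨h1, h2, C0_rhoMix_ge, by rw [h1]; exact lt_of_lt_of_le h2 C0_rhoMix_ge⟩

end OneShot
end

section
/- An incoherent-preserving Kraus operator does not increase the coherence rank of a pure state: if K is an incoherent-preserving d×d matrix and |φ⟩ is a unit vector with K|φ⟩ ≠ 0, then the number of nonzero computational-basis coefficients of K|φ⟩ is at most the number of nonzero computational-basis coefficients of |φ⟩; equivalently, for the normalized state |ψ⟩ = K|φ⟩/‖K|φ⟩‖ one has log₂ T(ψ) ≤ log₂ T(φ). -/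
open scoped Matrix ComplexOrder

namespace OneShot

variable {ι κ : Type*} [Fintype ι] [DecidableEq ι] [Fintype κ] [DecidableEq κ]

lemma incoherentPreserving_col {d : ℕ} (K : Matrix (Fin d) (Fin d) ℂ)
    (hK : IncoherentPreserving K) (i : Fin d) {k l : Fin d} (hkl : k ≠ l) :
    K k i = 0 ∨ K l i = 0 := by
  set δ : Matrix (Fin d) (Fin d) ℂ :=
    Matrix.diagonal (fun j => if j = i then 1 else 0) with hδ
  have hinc : IsIncoherent δ := by
    refine ⟨⟨?_, ?_⟩, Matrix.isDiag_diagonal _⟩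
    · apply Matrix.posSemidef_diagonal_iff.mpr
      intro j; split <;> simp
    · simp [hδ, Matrix.trace_diagonal]
  obtain ⟨c, hc, δ', ⟨_, hdiag⟩, heq⟩ := hK δ hinc
  have h0 : (K * δ * Kᴴ) k l = K k i * star (K l i) := by
    simp [hδ, Matrix.mul_apply, Matrix.diagonal_apply, Matrix.conjTranspose_apply,
      Finset.mul_sum, ite_mul, Finset.sum_ite_eq']
  have hz : K k i * star (K l i) = 0 := by
    rw [← h0, heq, Matrix.smul_apply, hdiag hkl, smul_zero]
  rcases mul_eq_zero.mp hz with h | h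
  · exact Or.inl h
  · exact Or.inr (by simpa using h)

/-- an incoherent-preserving Kraus operator does not increase the
coherence rank of a pure state. -/
theorem incoherentPreserving_coherence_rank {d : ℕ} (K : Matrix (Fin d) (Fin d) ℂ)
    (hK : IncoherentPreserving K) (φ : Fin d → ℂ)
    (hφ : ∑ i, Complex.normSq (φ i) = 1) (hKφ : K.mulVec φ ≠ 0) :
    T (K.mulVec φ) ≤ T φ ∧
    Real.logb 2
        (T ((Real.sqrt (∑ i, Complex.normSq (K.mulVec φ i)))⁻¹ • K.mulVec φ) : ℝ) ≤
      Real.logb 2 (T φ : ℝ) := by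
  classical
  have hmain : T (K.mulVec φ) ≤ T φ := by
    unfold T
    have hex : ∀ k ∈ Finset.univ.filter (fun k => K.mulVec φ k ≠ 0),
        ∃ i, K k i * φ i ≠ 0 := by
      intro k hk
      have hk' : K.mulVec φ k ≠ 0 := (Finset.mem_filter.mp hk).2
      by_contra h
      push_neg at h
      apply hk'
      simp only [Matrix.mulVec, dotProduct]
      exact Finset.sum_eq_zero fun i _ => h i
    refine Finset.card_le_card_of_injOn
      (fun k => if h : ∃ i, K k i * φ i ≠ 0 then h.choose else k) ?_ ?_
    · intro k hk
      simp only [dif_pos (hex k hk)]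
      have := (hex k hk).choose_spec
      simp only [Finset.mem_coe, Finset.mem_filter, Finset.mem_univ, true_and]
      exact fun h0 => this (by rw [h0, mul_zero])
    · intro k1 hk1 k2 hk2 heq
      simp only [dif_pos (hex k1 hk1), dif_pos (hex k2 hk2)] at heq
      by_contra hne
      have h1 := (hex k1 hk1).choose_spec
      have h2 := (hex k2 hk2).choose_spec
      rw [heq] at h1
      rcases incoherentPreserving_col K hK (hex k2 hk2).choose hne with h | h
      · exact h1 (by rw [h, zero_mul])
      · exact h2 (by rw [h, zero_mul])
  refine ⟨hmain, ?_⟩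
  have hpos : 0 < ∑ i, Complex.normSq (K.mulVec φ i) := by
    obtain ⟨k, hk⟩ := Function.ne_iff.mp hKφ
    exact Finset.sum_pos' (fun i _ => Complex.normSq_nonneg _)
      ⟨k, Finset.mem_univ k, by simpa [Complex.normSq_pos] using hk⟩
  have hr : (Real.sqrt (∑ i, Complex.normSq (K.mulVec φ i)))⁻¹ ≠ 0 :=
    inv_ne_zero (Real.sqrt_ne_zero'.mpr hpos)
  have hTs : T ((Real.sqrt (∑ i, Complex.normSq (K.mulVec φ i)))⁻¹ • K.mulVec φ)
      = T (K.mulVec φ) := by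
    unfold T
    congr 1
    apply Finset.filter_congr
    intro k _
    have hs : Real.sqrt (∑ i, Complex.normSq (K.mulVec φ i)) ≠ 0 :=
      Real.sqrt_ne_zero'.mpr hpos
    simp only [Pi.smul_apply, ne_eq, smul_eq_zero, inv_eq_zero, not_or]
    tauto
  rw [hTs]
  have hT1 : 0 < T (K.mulVec φ) := by
    obtain ⟨k, hk⟩ := Function.ne_iff.mp hKφ
    exact Finset.card_pos.mpr ⟨k, Finset.mem_filter.mpr ⟨Finset.mem_univ k, hk⟩⟩
  exact Real.logb_le_logb_of_le (by norm_num) (by exact_mod_cast hT1) (by exact_mod_cast hmain)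

end OneShot
end
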